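/- Let d ≥ 2 and let n₁, …, n_d be positive natural numbers. Set N = ∏_{k=1}^{d-1} min(n_k, n_{k+1}·n_{k+2}⋯n_d). Then every d-way real tensor A of size n₁×⋯×n_d can be written as A = ∑_{j=1}^N σ_j · (a_{1,j} ∘ a_{2,j} ∘ ⋯ ∘ a_{d,j}), where each σ_j ≥ 0, each mode vector a_{k,j} ∈ ℝ^{n_k} has Euclidean norm 1, and the N rank-1 tensors a_{1,j} ∘ ⋯ ∘ a_{d,j} are pairwise orthogonal with respect to the tensor inner product. In particular, the orthogonal rank of A (the minimal number of pairwise orthogonal rank-1 tensors summing to A) is at most N. -/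

import Mathlib

set_option maxHeartbeats 1000000

noncomputable section TTr1Aux

def Nval (d : ℕ) (n : Fin d → ℕ) : ℕ :=
  ∏ k ∈ Finset.univ.filter (fun k : Fin d => (k : ℕ) < d - 1),
    min (n k) (∏ j ∈ Finset.univ.filter (fun j : Fin d => k < j), n j)

theorem Nval_one (n : Fin 1 → ℕ) : Nval 1 n = 1 := by simp [Nval]

theorem Nval_succ (d : ℕ) (hd : 1 ≤ d) (n : Fin (d + 1) → ℕ) :
    Nval (d + 1) n
      = min (n 0) (∏ k : Fin d, n k.succ) * Nval d (fun k => n k.succ) := by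
  rw [Nval, Nval, Finset.prod_filter, Finset.prod_filter, Fin.prod_univ_succ]
  congr 1
  · rw [if_pos (by simp; omega)]
    congr 1
    rw [Finset.prod_filter, Fin.prod_univ_succ, if_neg (lt_irrefl _)]
    rw [one_mul]
    exact Finset.prod_congr rfl fun k _ => if_pos (Fin.succ_pos k)
  · refine Finset.prod_congr rfl fun k _ => ?_
    have hiff : ((k.succ : Fin (d+1)) : ℕ) < (d + 1) - 1 ↔ (k : ℕ) < d - 1 := by
      rw [Fin.val_succ]; omega
    by_cases hk : (k : ℕ) < d - 1
    · rw [if_pos (hiff.mpr hk), if_pos hk]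
      congr 1
      rw [Finset.prod_filter, Finset.prod_filter, Fin.prod_univ_succ,
        if_neg (Fin.not_lt_zero _), one_mul]
      exact Finset.prod_congr rfl fun j _ => by simp only [Fin.succ_lt_succ_iff]
    · rw [if_neg (fun h => hk (hiff.mp h)), if_neg hk]

theorem matA (m p : ℕ) (M : Fin m → Fin p → ℝ) :
    ∃ (u : Fin m → Fin m → ℝ) (w : Fin m → Fin p → ℝ),
      (∀ s, ∑ x : Fin m, (u s x) ^ 2 = 1) ∧
      (∀ s s', s ≠ s' → ∑ x : Fin m, u s x * u s' x = 0) ∧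
      (∀ i j, M i j = ∑ s, u s i * w s j) := by
  classical
  refine ⟨fun s x => if x = s then 1 else 0, fun s j => M s j, ?_, ?_, ?_⟩
  · intro s; simp [ite_pow, Finset.sum_ite_eq']
  · intro s s' hss
    simp only [ite_mul, one_mul, zero_mul, Finset.sum_ite_eq']
    simp [hss]
  · intro i j
    simp [ite_mul, one_mul, zero_mul, Finset.sum_ite_eq]

theorem matB (m p : ℕ) (hpm : p ≤ m) (M : Fin m → Fin p → ℝ) :
    ∃ (u : Fin p → Fin m → ℝ) (w : Fin p → Fin p → ℝ),
      (∀ s, ∑ x : Fin m, (u s x) ^ 2 = 1) ∧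
      (∀ s s', s ≠ s' → ∑ x : Fin m, u s x * u s' x = 0) ∧
      (∀ i j, M i j = ∑ s, u s i * w s j) := by
  classical
  let c : Fin p → EuclideanSpace ℝ (Fin m) := fun j => WithLp.toLp 2 (fun i => M i j)
  let W : Submodule ℝ (EuclideanSpace ℝ (Fin m)) := Submodule.span ℝ (Set.range c)
  let r : ℕ := Module.finrank ℝ W
  have hrp : r ≤ p := by
    have := finrank_range_le_card (R := ℝ) c
    simpa [Set.finrank, Fintype.card_fin] using this
  have hrm : r ≤ m := le_trans hrp hpm
  let ob : OrthonormalBasis (Fin r) ℝ W := stdOrthonormalBasis ℝ W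
  let v : Fin m → EuclideanSpace ℝ (Fin m) := fun i => if h : (i : ℕ) < r then (ob ⟨i, h⟩ : EuclideanSpace ℝ (Fin m)) else 0
  have hcard : Module.finrank ℝ (EuclideanSpace ℝ (Fin m)) = Fintype.card (Fin m) := by
    simp [finrank_euclideanSpace_fin]
  have hvon : Orthonormal ℝ (Set.restrict {i : Fin m | (i : ℕ) < r} v) := by
    constructor
    · rintro ⟨i, hi⟩
      have hi' : (i : ℕ) < r := hi
      simp only [Set.restrict, Set.restrict_apply, v]
      rw [dif_pos hi']
      have := ob.orthonormal.1 ⟨i, hi'⟩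
      rwa [Submodule.norm_coe]
    · rintro ⟨i, hi⟩ ⟨i', hi'⟩ hne
      have h1 : (i : ℕ) < r := hi
      have h2 : (i' : ℕ) < r := hi'
      simp only [Set.restrict, Set.restrict_apply, v]
      rw [dif_pos h1, dif_pos h2]
      have hne' : (⟨(i:ℕ), h1⟩ : Fin r) ≠ ⟨(i':ℕ), h2⟩ := by
        intro h
        exact hne (Subtype.ext (Fin.ext (by simpa using congrArg Fin.val h)))
      exact ob.orthonormal.2 hne'
  obtain ⟨b, hb⟩ := hvon.exists_orthonormalBasis_extension_of_card_eq hcard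
  -- the coercions of ob into E are values of b
  have hbv : ∀ k : Fin r, (ob k : EuclideanSpace ℝ (Fin m)) = b ⟨(k : ℕ), lt_of_lt_of_le k.2 hrm⟩ := by
    intro k
    have hk : (⟨(k : ℕ), lt_of_lt_of_le k.2 hrm⟩ : Fin m) ∈ {i : Fin m | (i : ℕ) < r} := k.2
    rw [hb _ hk]
    simp only [v]
    rw [dif_pos (show ((⟨(k : ℕ), lt_of_lt_of_le k.2 hrm⟩ : Fin m) : ℕ) < r from k.2)]
  -- tail coefficients vanish
  have hzero : ∀ (j : Fin p) (i : Fin m), p ≤ i.val → (inner ℝ (b i) (c j) : ℝ) = 0 := by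
    intro j i hpi
    have hcj : c j ∈ W := Submodule.subset_span (Set.mem_range_self j)
    have hrepr := ob.sum_repr ⟨c j, hcj⟩
    have hrepr' : (∑ k : Fin r, ob.repr ⟨c j, hcj⟩ k • (ob k : EuclideanSpace ℝ (Fin m))) = c j := by
      have := congrArg (Subtype.val) hrepr
      simpa using this
    rw [← hrepr', inner_sum]
    refine Finset.sum_eq_zero fun k _ => ?_
    rw [real_inner_smul_right, hbv k]
    have hne : i ≠ ⟨(k : ℕ), lt_of_lt_of_le k.2 hrm⟩ := by
      intro h
      have : (i : ℕ) = (k : ℕ) := congrArg Fin.val h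
      omega
    rw [b.orthonormal.2 hne]
    ring
  -- main reconstruction
  refine ⟨fun s i => b (Fin.castLE hpm s) i, fun s j => (inner ℝ (b (Fin.castLE hpm s)) (c j) : ℝ), ?_, ?_, ?_⟩
  · intro s
    have h1 : (inner ℝ (b (Fin.castLE hpm s)) (b (Fin.castLE hpm s)) : ℝ) = 1 := by
      rw [real_inner_self_eq_norm_sq, b.orthonormal.1]; norm_num
    rw [← h1, PiLp.inner_apply]
    simp [pow_two]
  · intro s s' hss
    have hne : Fin.castLE hpm s ≠ Fin.castLE hpm s' := by
      intro h; exact hss (Fin.castLE_injective hpm h)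
    have h0 : (inner ℝ (b (Fin.castLE hpm s)) (b (Fin.castLE hpm s')) : ℝ) = 0 := b.orthonormal.2 hne
    rw [← h0, PiLp.inner_apply]
    simp [mul_comm]
  · intro i j
    have hrepr := b.sum_repr' (c j)
    have hMc : M i j = c j i := rfl
    rw [hMc, ← hrepr]
    have hzeros : ∀ x : Fin m, x ∉ Finset.univ.map (Fin.castLEEmb hpm) → (inner ℝ (b x) (c j) : ℝ) • b x = 0 := by
      intro x hx
      have hpx : p ≤ (x : ℕ) := by
        by_contra hc
        exact hx (Finset.mem_map.mpr ⟨⟨(x : ℕ), lt_of_not_ge hc⟩, Finset.mem_univ _, by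
          simp [Fin.castLEEmb]⟩)
      rw [hzero j x hpx, zero_smul]
    have hsplit : (∑ k : Fin m, (inner ℝ (b k) (c j) : ℝ) • b k)
        = ∑ s : Fin p, (inner ℝ (b (Fin.castLE hpm s)) (c j) : ℝ) • b (Fin.castLE hpm s) := by
      rw [← Finset.sum_subset (Finset.subset_univ (Finset.univ.map (Fin.castLEEmb hpm)))
        (fun x _ hx => hzeros x hx), Finset.sum_map]
      rfl
    rw [hsplit, WithLp.ofLp_sum, Finset.sum_apply]
    refine Finset.sum_congr rfl fun s _ => ?_
    rw [WithLp.ofLp_smul, Pi.smul_apply, smul_eq_mul, mul_comm]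

theorem matMin (m p : ℕ) (M : Fin m → Fin p → ℝ) :
    ∃ (u : Fin (min m p) → Fin m → ℝ) (w : Fin (min m p) → Fin p → ℝ),
      (∀ s, ∑ x : Fin m, (u s x) ^ 2 = 1) ∧
      (∀ s s', s ≠ s' → ∑ x : Fin m, u s x * u s' x = 0) ∧
      (∀ i j, M i j = ∑ s, u s i * w s j) := by
  rcases le_total m p with h | h
  · obtain ⟨u, w, h1, h2, h3⟩ := matA m p M
    let e : Fin (min m p) ≃ Fin m := finCongr (min_eq_left h)
    refine ⟨fun s => u (e s), fun s => w (e s), fun s => h1 _,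
      fun s s' hss => h2 _ _ (fun hc => hss (e.injective hc)), fun i j => ?_⟩
    rw [h3 i j]
    exact (Fintype.sum_equiv e _ _ fun s => rfl).symm
  · obtain ⟨u, w, h1, h2, h3⟩ := matB m p h M
    let e : Fin (min m p) ≃ Fin p := finCongr (min_eq_right h)
    refine ⟨fun s => u (e s), fun s => w (e s), fun s => h1 _,
      fun s s' hss => h2 _ _ (fun hc => hss (e.injective hc)), fun i j => ?_⟩
    rw [h3 i j]
    exact (Fintype.sum_equiv e _ _ fun s => rfl).symm

def Good (d : ℕ) (n : Fin d → ℕ) : Prop :=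
  ∀ A : ((k : Fin d) → Fin (n k)) → ℝ,
    ∃ (σ : Fin (Nval d n) → ℝ) (a : (k : Fin d) → Fin (Nval d n) → Fin (n k) → ℝ),
      (∀ j, 0 ≤ σ j) ∧
      (∀ (k : Fin d) (j : Fin (Nval d n)), ∑ x : Fin (n k), (a k j x) ^ 2 = 1) ∧
      (∀ j j' : Fin (Nval d n), j ≠ j' →
        ∑ i : ((k : Fin d) → Fin (n k)),
          (∏ k : Fin d, a k j (i k)) * (∏ k : Fin d, a k j' (i k)) = 0) ∧
      (∀ i : ((k : Fin d) → Fin (n k)),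
        A i = ∑ j : Fin (Nval d n), σ j * ∏ k : Fin d, a k j (i k))

theorem base_case (n : Fin 1 → ℕ) (hn : ∀ k, 0 < n k)
    (A : ((k : Fin 1) → Fin (n k)) → ℝ) :
    ∃ (σ : Fin (Nval 1 n) → ℝ) (a : (k : Fin 1) → Fin (Nval 1 n) → Fin (n k) → ℝ),
      (∀ j, 0 ≤ σ j) ∧
      (∀ (k : Fin 1) (j : Fin (Nval 1 n)), ∑ x : Fin (n k), (a k j x) ^ 2 = 1) ∧
      (∀ j j' : Fin (Nval 1 n), j ≠ j' →
        ∑ i : ((k : Fin 1) → Fin (n k)),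
          (∏ k : Fin 1, a k j (i k)) * (∏ k : Fin 1, a k j' (i k)) = 0) ∧
      (∀ i : ((k : Fin 1) → Fin (n k)), A i = ∑ j : Fin (Nval 1 n), σ j * ∏ k : Fin 1, a k j (i k)) := by
  classical
  have hN1 : Nval 1 n = 1 := Nval_one n
  have hsub : ∀ j j' : Fin (Nval 1 n), j = j' := by
    intro j j'
    have h1 : (j : ℕ) < 1 := by have := j.isLt; omega
    have h2 : (j' : ℕ) < 1 := by have := j'.isLt; omega
    exact Fin.ext (by omega)
  let V : Fin (n 0) → ℝ := fun x => A (Fin.cons x (fun k => k.elim0))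
  have hAV : ∀ i : ((k : Fin 1) → Fin (n k)), A i = V (i 0) := by
    intro i
    have htail : Fin.tail i = (fun k : Fin 0 => k.elim0) := funext fun k => k.elim0
    have : A (Fin.cons (i 0) (Fin.tail i)) = V (i 0) := by rw [htail]
    rwa [Fin.cons_self_tail] at this
  set S : ℝ := ∑ x : Fin (n 0), V x ^ 2 with hSdef
  have hS0 : 0 ≤ S := Finset.sum_nonneg fun x _ => sq_nonneg _
  by_cases hS : S = 0
  · -- A = 0
    have hV0 : ∀ x, V x = 0 := by
      intro x
      have := (Finset.sum_eq_zero_iff_of_nonneg (fun x _ => sq_nonneg (V x))).mp hS x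
        (Finset.mem_univ x)
      exact pow_eq_zero_iff (by norm_num) |>.mp this
    refine ⟨fun _ => 0,
      fun k => Fin.cases (motive := fun k => Fin (Nval 1 n) → Fin (n k) → ℝ)
        (fun _ x => if x = ⟨0, hn 0⟩ then 1 else 0) (fun k' => k'.elim0) k,
      fun _ => le_refl 0, ?_, ?_, ?_⟩
    · intro k j
      have hk : k = 0 := Subsingleton.elim k 0
      subst hk
      simp [ite_pow, Finset.sum_ite_eq']
    · intro j j' hne; exact absurd (hsub j j') hne
    · intro i
      rw [hAV i, hV0]
      simp
  · have hSpos : 0 < S := lt_of_le_of_ne hS0 (Ne.symm hS)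
    have hsq : Real.sqrt S ≠ 0 := by positivity
    refine ⟨fun _ => Real.sqrt S,
      fun k => Fin.cases (motive := fun k => Fin (Nval 1 n) → Fin (n k) → ℝ)
        (fun _ x => V x / Real.sqrt S) (fun k' => k'.elim0) k,
      fun _ => Real.sqrt_nonneg S, ?_, ?_, ?_⟩
    · intro k j
      have hk : k = 0 := Subsingleton.elim k 0
      subst hk
      simp only [Fin.cases_zero, div_pow, Real.sq_sqrt hS0, ← Finset.sum_div]
      exact div_self hS
    · intro j j' hne; exact absurd (hsub j j') hne
    · intro i
      have hterm : ∀ j : Fin (Nval 1 n),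
          Real.sqrt S * ∏ k : Fin 1,
            (Fin.cases (motive := fun k => Fin (Nval 1 n) → Fin (n k) → ℝ)
              (fun _ x => V x / Real.sqrt S) (fun k' => k'.elim0) k) j (i k) = V (i 0) := by
        intro j
        rw [Fin.prod_univ_one]
        simp only [Fin.cases_zero]
        field_simp
      rw [hAV i]
      calc V (i 0) = (Finset.univ.card : ℕ) • V (i 0) := by
            rw [Finset.card_univ, Fintype.card_fin, hN1, one_smul]
        _ = ∑ _j : Fin (Nval 1 n), V (i 0) := (Finset.sum_const _).symm
        _ = _ := Finset.sum_congr rfl fun j _ => (hterm j).symm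

theorem succ_case (d : ℕ) (hd : 1 ≤ d)
    (ih : ∀ (n : Fin d → ℕ), (∀ k, 0 < n k) → Good d n)
    (n : Fin (d + 1) → ℕ) (hn : ∀ k, 0 < n k) : Good (d + 1) n := by
  classical
  intro A
  set n' : Fin d → ℕ := fun k => n k.succ with hn'def
  set P : ℕ := ∏ k : Fin d, n' k with hPdef
  have hcard : Fintype.card ((k : Fin d) → Fin (n' k)) = P := by
    simp [Fintype.card_pi, hPdef]
  let eP : Fin P ≃ ((k : Fin d) → Fin (n' k)) := (Fintype.equivFinOfCardEq hcard).symm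
  let M : Fin (n 0) → Fin P → ℝ := fun x K => A (Fin.cons x (eP K))
  obtain ⟨u, w, hu1, hu2, hu3⟩ := matMin (n 0) P M
  let C : Fin (min (n 0) P) → ((k : Fin d) → Fin (n' k)) → ℝ := fun s y => w s (eP.symm y)
  have H := fun s : Fin (min (n 0) P) => ih n' (fun k => hn k.succ) (C s)
  choose τ b hτ0 hbnorm hborth hbrecon using H
  have keyEq : Nval (d + 1) n = min (n 0) P * Nval d n' := Nval_succ d hd n
  let e : Fin (Nval (d + 1) n) ≃ Fin (min (n 0) P) × Fin (Nval d n') :=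
    (finCongr keyEq).trans finProdFinEquiv.symm
  refine ⟨fun j => τ (e j).1 (e j).2,
    fun k => Fin.cases (motive := fun k => Fin (Nval (d + 1) n) → Fin (n k) → ℝ)
      (fun j x => u (e j).1 x) (fun k' j y => b (e j).1 k' (e j).2 y) k,
    fun j => hτ0 _ _, ?_, ?_, ?_⟩
  · intro k j
    induction k using Fin.cases with
    | zero => simpa using hu1 (e j).1
    | succ k' => simpa using hbnorm (e j).1 k' (e j).2
  all_goals
    have hsum : ∀ f : ((k : Fin (d + 1)) → Fin (n k)) → ℝ,
        ∑ i, f i = ∑ x : Fin (n 0), ∑ y : (k : Fin d) → Fin (n' k), f (Fin.cons x y) := by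
      intro f
      rw [← (Fintype.sum_equiv (Fin.consEquiv (fun k => Fin (n k)))
        (fun q => f (Fin.consEquiv (fun k => Fin (n k)) q)) f (fun q => rfl))]
      rw [Fintype.sum_prod_type]
      rfl
    have hprod : ∀ (j : Fin (Nval (d + 1) n)) (x : Fin (n 0)) (y : (k : Fin d) → Fin (n' k)),
        (∏ k : Fin (d + 1),
          (Fin.cases (motive := fun k => Fin (Nval (d + 1) n) → Fin (n k) → ℝ)
            (fun j x => u (e j).1 x) (fun k' j y => b (e j).1 k' (e j).2 y) k) j
            (Fin.cons (α := fun k => Fin (n k)) x y k))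
        = u (e j).1 x * ∏ k' : Fin d, b (e j).1 k' (e j).2 (y k') := by
      intro j x y
      rw [Fin.prod_univ_succ]
      simp
  · intro j j' hne
    rw [hsum]
    have hstep : ∀ x : Fin (n 0),
        (∑ y : (k : Fin d) → Fin (n' k),
          (∏ k : Fin (d + 1),
            (Fin.cases (motive := fun k => Fin (Nval (d + 1) n) → Fin (n k) → ℝ)
              (fun j x => u (e j).1 x) (fun k' j y => b (e j).1 k' (e j).2 y) k) j
              (Fin.cons (α := fun k => Fin (n k)) x y k)) *
          (∏ k : Fin (d + 1),
            (Fin.cases (motive := fun k => Fin (Nval (d + 1) n) → Fin (n k) → ℝ)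
              (fun j x => u (e j).1 x) (fun k' j y => b (e j).1 k' (e j).2 y) k) j'
              (Fin.cons (α := fun k => Fin (n k)) x y k)))
        = (u (e j).1 x * u (e j').1 x) *
          ∑ y : (k : Fin d) → Fin (n' k),
            (∏ k' : Fin d, b (e j).1 k' (e j).2 (y k')) *
            (∏ k' : Fin d, b (e j').1 k' (e j').2 (y k')) := by
      intro x
      rw [Finset.mul_sum]
      refine Finset.sum_congr rfl fun y _ => ?_
      rw [hprod, hprod]
      ring
    calc (∑ x : Fin (n 0), ∑ y : (k : Fin d) → Fin (n' k), _ * _)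
        = ∑ x : Fin (n 0), (u (e j).1 x * u (e j').1 x) *
            ∑ y : (k : Fin d) → Fin (n' k),
              (∏ k' : Fin d, b (e j).1 k' (e j).2 (y k')) *
              (∏ k' : Fin d, b (e j').1 k' (e j').2 (y k')) :=
          Finset.sum_congr rfl fun x _ => hstep x
      _ = (∑ x : Fin (n 0), u (e j).1 x * u (e j').1 x) *
            ∑ y : (k : Fin d) → Fin (n' k),
              (∏ k' : Fin d, b (e j).1 k' (e j).2 (y k')) *
              (∏ k' : Fin d, b (e j').1 k' (e j').2 (y k')) := by
          rw [Finset.sum_mul]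
      _ = 0 := by
          by_cases hss : (e j).1 = (e j').1
          · have htt : (e j).2 ≠ (e j').2 := fun h => hne (e.injective (Prod.ext hss h))
            rw [← hss, hborth _ _ _ htt, mul_zero]
          · rw [hu2 _ _ hss, zero_mul]
  · intro i
    have hA : A i = M (i 0) (eP.symm (Fin.tail i)) := by
      show A i = A (Fin.cons (i 0) (eP (eP.symm (Fin.tail i))))
      rw [Equiv.apply_symm_apply, Fin.cons_self_tail]
    rw [hA, hu3]
    have hRHS : (∑ j : Fin (Nval (d + 1) n), τ (e j).1 (e j).2 *
          ∏ k : Fin (d + 1),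
            (Fin.cases (motive := fun k => Fin (Nval (d + 1) n) → Fin (n k) → ℝ)
              (fun j x => u (e j).1 x) (fun k' j y => b (e j).1 k' (e j).2 y) k) j (i k))
        = ∑ q : Fin (min (n 0) P) × Fin (Nval d n'),
            τ q.1 q.2 * (u q.1 (i 0) * ∏ k' : Fin d, b q.1 k' q.2 (i k'.succ)) := by
      refine Fintype.sum_equiv e _ _ fun j => ?_
      have hip : ∀ k : Fin (d + 1), i k = Fin.cons (α := fun k => Fin (n k)) (i 0) (Fin.tail i) k := by
        intro k; rw [Fin.cons_self_tail]
      have := hprod j (i 0) (Fin.tail i)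
      simp only [← hip] at this
      rw [this]
      rfl
    rw [hRHS, Fintype.sum_prod_type]
    refine Finset.sum_congr rfl fun s _ => ?_
    have hw : w s (eP.symm (Fin.tail i)) = C s (Fin.tail i) := rfl
    rw [hw, hbrecon s (Fin.tail i), Finset.mul_sum]
    refine Finset.sum_congr rfl fun t _ => ?_
    have htail : ∀ k' : Fin d, Fin.tail i k' = i k'.succ := fun k' => rfl
    simp only [htail]
    ring


theorem aux_decomposition : ∀ (d : ℕ), 1 ≤ d → ∀ (n : Fin d → ℕ), (∀ k, 0 < n k) → Good d n := by
  intro d hd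
  induction d, hd using Nat.le_induction with
  | base => intro n hn; exact base_case n hn
  | succ d hd ih => intro n hn; exact succ_case d hd ih n hn

end TTr1Aux

/-- Every d-way real tensor decomposes into N = ∏_{k=1}^{d-1} min(n_k, n_{k+1}⋯n_d)
orthogonal rank-1 terms with nonnegative weights and unit-norm mode vectors; in
particular its orthogonal rank is at most N. -/
theorem ttr1_decomposition (d : ℕ) (hd : 2 ≤ d) (n : Fin d → ℕ) (hn : ∀ k, 0 < n k)
    (N : ℕ)
    (hN : N = ∏ k ∈ Finset.univ.filter (fun k : Fin d => (k : ℕ) < d - 1),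
        min (n k) (∏ j ∈ Finset.univ.filter (fun j : Fin d => k < j), n j))
    (A : ((k : Fin d) → Fin (n k)) → ℝ) :
    ∃ (σ : Fin N → ℝ) (a : (k : Fin d) → Fin N → Fin (n k) → ℝ),
      (∀ j, 0 ≤ σ j) ∧
      (∀ (k : Fin d) (j : Fin N), ∑ x : Fin (n k), (a k j x) ^ 2 = 1) ∧
      (∀ j j' : Fin N, j ≠ j' →
        ∑ i : ((k : Fin d) → Fin (n k)),
          (∏ k : Fin d, a k j (i k)) * (∏ k : Fin d, a k j' (i k)) = 0) ∧
      (∀ i : ((k : Fin d) → Fin (n k)), A i = ∑ j : Fin N, σ j * ∏ k : Fin d, a k j (i k)) := by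
  subst hN
  exact aux_decomposition d (by omega) n hn A
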